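/- arXiv:0808.3627 — 10 statements merged into one kernel-verified Lean document; each statement's English description precedes it below -/
import Mathlib

section
/- Let (f₁, f₀): H• → G• be a strict morphism of crossed modules. Form the semidirect product E = H₀ ⋉ G₁ with product (y₀, g₀)(y₁, g₁) = (y₀y₁, g₀^{f₀(y₁)} g₁). Define π(y, g) = y, ι(g) = (1, g), κ(h) = (∂_H(h), f₁(h)⁻¹), and j(y, g) = f₀(y)·∂_G(g). Then ([H•, E, G•], κ, ι, π, j) is a butterfly from H• to G•. -/
theorem strict_morphism_gives_butterfly
    {H₁ H₀ G₁ G₀ : Type*} [Group H₁] [Group H₀] [Group G₁] [Group G₀]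
    (δH : H₁ →* H₀) (aH : H₁ → H₀ → H₁)
    (haH1 : ∀ h, aH h 1 = h)
    (haHmul : ∀ h x y, aH h (x * y) = aH (aH h x) y)
    (haHhom : ∀ h h' x, aH (h * h') x = aH h x * aH h' x)
    (hδH : ∀ h x, δH (aH h x) = x⁻¹ * δH h * x)
    (hpfH : ∀ h₀ h₁, aH h₀ (δH h₁) = h₁⁻¹ * h₀ * h₁)
    (δG : G₁ →* G₀) (aG : G₁ → G₀ → G₁)
    (haG1 : ∀ g, aG g 1 = g)
    (haGmul : ∀ g x y, aG g (x * y) = aG (aG g x) y)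
    (haGhom : ∀ g g' x, aG (g * g') x = aG g x * aG g' x)
    (hδG : ∀ g x, δG (aG g x) = x⁻¹ * δG g * x)
    (hpfG : ∀ g₀ g₁, aG g₀ (δG g₁) = g₁⁻¹ * g₀ * g₁)
    (f₁ : H₁ →* G₁) (f₀ : H₀ →* G₀)
    (hf : ∀ h, δG (f₁ h) = f₀ (δH h))
    (hfe : ∀ h x, f₁ (aH h x) = aG (f₁ h) (f₀ x))
    (m : (H₀ × G₁) → (H₀ × G₁) → (H₀ × G₁))
    (hm : ∀ p q, m p q = (p.1 * q.1, aG p.2 (f₀ q.1) * q.2))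
    (πm : H₀ × G₁ → H₀) (hπm : ∀ p, πm p = p.1)
    (ιm : G₁ → H₀ × G₁) (hιm : ∀ g, ιm g = ((1 : H₀), g))
    (κm : H₁ → H₀ × G₁) (hκm : ∀ h, κm h = (δH h, (f₁ h)⁻¹))
    (jm : H₀ × G₁ → G₀) (hjm : ∀ p, jm p = f₀ p.1 * δG p.2) :
    (∀ p q r, m (m p q) r = m p (m q r)) ∧
    (∀ p, m ((1 : H₀), (1 : G₁)) p = p ∧ m p ((1 : H₀), (1 : G₁)) = p) ∧
    (∀ p, ∃ q, m p q = ((1 : H₀), (1 : G₁)) ∧ m q p = ((1 : H₀), (1 : G₁))) ∧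
    (∀ p q, πm (m p q) = πm p * πm q) ∧
    (∀ p q, jm (m p q) = jm p * jm q) ∧
    (∀ g g', ιm (g * g') = m (ιm g) (ιm g')) ∧
    (∀ h h', κm (h * h') = m (κm h) (κm h')) ∧
    (∀ h, πm (κm h) = δH h) ∧
    (∀ g, jm (ιm g) = δG g) ∧
    (∀ h, jm (κm h) = 1) ∧
    (∀ g, πm (ιm g) = 1) ∧
    Function.Injective ιm ∧
    (∀ p, πm p = 1 → ∃ g, p = ιm g) ∧
    Function.Surjective πm ∧
    (∀ g p q, m p q = ((1 : H₀), (1 : G₁)) → m q p = ((1 : H₀), (1 : G₁)) →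
      ιm (aG g (jm p)) = m (m q (ιm g)) p) ∧
    (∀ h p q, m p q = ((1 : H₀), (1 : G₁)) → m q p = ((1 : H₀), (1 : G₁)) →
      κm (aH h (πm p)) = m (m q (κm h)) p) := by
  have haG1' : ∀ x, aG (1 : G₁) x = 1 := by
    intro x
    have := haGhom 1 1 x
    simpa using this.symm
  have haGinv : ∀ g x, aG g⁻¹ x = (aG g x)⁻¹ := by
    intro g x
    have h := haGhom g g⁻¹ x
    simp [haG1'] at h
    exact eq_inv_of_mul_eq_one_right h.symm
  refine ⟨?_, ?_, ?_, ?_, ?_, ?_, ?_, ?_, ?_, ?_, ?_, ?_, ?_, ?_, ?_, ?_⟩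
  · intro p q r
    simp only [hm, map_mul]
    refine Prod.ext (by simp [mul_assoc]) ?_
    simp [haGmul, haGhom, mul_assoc]
  · intro p
    constructor <;> simp [hm, haG1', haG1]
  · intro p
    refine ⟨(p.1⁻¹, (aG p.2 (f₀ p.1⁻¹))⁻¹), ?_, ?_⟩
    · refine Prod.ext ?_ ?_ <;> simp [hm]
    · refine Prod.ext ?_ ?_
      · simp [hm]
      · have h2 : aG (aG p.2 ((f₀ p.1)⁻¹)) (f₀ p.1) = p.2 := by
          rw [← haGmul, inv_mul_cancel, haG1]
        simp [hm, haGinv, map_inv, h2]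
  · intro p q; simp [hm, hπm]
  · intro p q
    simp only [hm, hjm, map_mul, hδG]
    group
  · intro g g'
    simp [hιm, hm, haG1]
  · intro h h'
    refine Prod.ext (by simp [hκm, hm]) ?_
    simp only [hκm, hm, ← hf, hpfG, map_mul]
    group
  · intro h; simp [hπm, hκm]
  · intro g; simp [hjm, hιm]
  · intro h; simp [hjm, hκm, hf]
  · intro g; simp [hπm, hιm]
  · intro g g' hgg'
    simpa [hιm, Prod.ext_iff] using hgg'
  · intro p hp
    rw [hπm] at hp
    exact ⟨p.2, by rw [hιm]; exact Prod.ext hp rfl⟩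
  · intro y; exact ⟨(y, 1), by simp [hπm]⟩
  · intro g p q hpq hqp
    rw [hm] at hqp
    have h1 : q.1 * p.1 = 1 := congrArg Prod.fst hqp
    have h2 : aG q.2 (f₀ p.1) * p.2 = 1 := congrArg Prod.snd hqp
    have h2' : aG q.2 (f₀ p.1) = p.2⁻¹ := eq_inv_of_mul_eq_one_left h2
    refine Prod.ext (by simp [hιm, hm, haG1, h1]) ?_
    simp only [hιm, hm, hjm, haG1, map_one, mul_one, haGmul, haGhom, hpfG, h2']
  · intro h p q hpq hqp
    rw [hm] at hpq hqp
    have h1 : p.1 * q.1 = 1 := congrArg Prod.fst hpq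
    have hq1 : q.1 = p.1⁻¹ := eq_inv_of_mul_eq_one_right h1
    have h2 : aG q.2 (f₀ p.1) * p.2 = 1 := congrArg Prod.snd hqp
    refine Prod.ext ?_ ?_
    · simp [hκm, hm, hπm, hδH, hq1, mul_assoc]
    · simp only [hκm, hm, hπm, hfe, haGinv]
      have hb : aG q.2 (f₀ (δH h)) = (f₁ h)⁻¹ * q.2 * f₁ h := by
        rw [← hf, hpfG]
      rw [hb]
      have h3 : (f₁ h)⁻¹ * q.2 * f₁ h * (f₁ h)⁻¹ = (f₁ h)⁻¹ * q.2 := by group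
      rw [h3, haGhom, haGinv, mul_assoc, h2, mul_one]
end

section
/- Let [H•, E, G•] be a butterfly equipped with a group homomorphism s: H₀ → E such that π ∘ s = id_{H₀} (a splitting). Define f₀ = j ∘ s: H₀ → G₀, and for each h ∈ H₁ let f₁(h) ∈ G₁ be the unique element with s(∂_H h) = κ(h) · ι(f₁(h)). Then f₁ is well defined, f₁: H₁ → G₁ is a group homomorphism, ∂_G ∘ f₁ = f₀ ∘ ∂_H, and f₁(h^x) = f₁(h)^{f₀(x)} for all h ∈ H₁, x ∈ H₀; that is, (f₁, f₀) is a strict morphism of crossed modules. -/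
theorem split_butterfly_gives_strict_morphism
    {H₁ H₀ G₁ G₀ : Type*} [Group H₁] [Group H₀] [Group G₁] [Group G₀]
    (δH : H₁ →* H₀) (aH : H₁ → H₀ → H₁)
    (haH1 : ∀ h, aH h 1 = h)
    (haHmul : ∀ h x y, aH h (x * y) = aH (aH h x) y)
    (haHhom : ∀ h h' x, aH (h * h') x = aH h x * aH h' x)
    (hδH : ∀ h x, δH (aH h x) = x⁻¹ * δH h * x)
    (hpfH : ∀ h₀ h₁, aH h₀ (δH h₁) = h₁⁻¹ * h₀ * h₁)
    (δG : G₁ →* G₀) (aG : G₁ → G₀ → G₁)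
    (haG1 : ∀ g, aG g 1 = g)
    (haGmul : ∀ g x y, aG g (x * y) = aG (aG g x) y)
    (haGhom : ∀ g g' x, aG (g * g') x = aG g x * aG g' x)
    (hδG : ∀ g x, δG (aG g x) = x⁻¹ * δG g * x)
    (hpfG : ∀ g₀ g₁, aG g₀ (δG g₁) = g₁⁻¹ * g₀ * g₁)
    {E : Type*} [Group E]
    (κ : H₁ →* E) (ι : G₁ →* E) (π : E →* H₀) (j : E →* G₀)
    (hπκ : ∀ h, π (κ h) = δH h)
    (hjι : ∀ g, j (ι g) = δG g)
    (hjκ : ∀ h, j (κ h) = 1)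
    (hπι : ∀ g, π (ι g) = 1)
    (hιinj : Function.Injective ι)
    (hkerπ : ∀ e, π e = 1 → ∃ g, e = ι g)
    (hπsurj : Function.Surjective π)
    (heqι : ∀ g e, ι (aG g (j e)) = e⁻¹ * ι g * e)
    (heqκ : ∀ h e, κ (aH h (π e)) = e⁻¹ * κ h * e)
    (s : H₀ →* E) (hs : ∀ x, π (s x) = x) :
    (∀ h : H₁, ∃! g : G₁, s (δH h) = κ h * ι g) ∧
    (∀ f₁ : H₁ → G₁, (∀ h, s (δH h) = κ h * ι (f₁ h)) →
      (∀ h h', f₁ (h * h') = f₁ h * f₁ h') ∧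
      (∀ h, δG (f₁ h) = j (s (δH h))) ∧
      (∀ h x, f₁ (aH h x) = aG (f₁ h) (j (s x)))) := by
  constructor
  · intro h
    have hπ : π ((κ h)⁻¹ * s (δH h)) = 1 := by
      simp [hπκ, hs]
    obtain ⟨g, hg⟩ := hkerπ _ hπ
    refine ⟨g, ?_, ?_⟩
    · show s (δH h) = κ h * ι g
      rw [← hg]; group
    · intro g' hg'
      apply hιinj
      rw [← hg]
      rw [hg'] at *
      group
  · intro f₁ hf₁
    -- ι g commutes with κ h'
    have comm : ∀ (g : G₁) (h : H₁), ι g * κ h = κ h * ι g := by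
      intro g h
      have := heqι g (κ h)
      rw [hjκ, haG1] at this
      conv_rhs => rw [this]
      group
    have hconj : ∀ (g : G₁) (e : E), ι (aG g (j e)) = e⁻¹ * ι g * e := heqι
    constructor
    · intro h h'
      apply hιinj
      have key : κ (h * h') * ι (f₁ (h * h')) = κ (h * h') * ι (f₁ h * f₁ h') := by
        rw [← hf₁ (h * h'), map_mul δH, map_mul s, hf₁ h, hf₁ h', map_mul κ, map_mul ι,
          mul_assoc, mul_assoc, ← mul_assoc (ι (f₁ h)), comm (f₁ h) h', mul_assoc]
      exact mul_left_cancel key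
    refine ⟨?_, ?_⟩
    · intro h
      rw [hf₁ h, map_mul, hjκ, hjι, one_mul]
    · intro h x
      apply hιinj
      have e1 : s (δH (aH h x)) = κ (aH h x) * ι (f₁ (aH h x)) := hf₁ _
      have e2 : s (δH (aH h x)) = κ (aH h x) * ι (aG (f₁ h) (j (s x))) := by
        rw [hδH, map_mul, map_mul, map_inv]
        have hκ : κ (aH h x) = (s x)⁻¹ * κ h * s x := by
          have := heqκ h (s x); rwa [hs] at this
        rw [hκ, heqι (f₁ h) (s x), hf₁ h]
        group
      have := e1.symm.trans e2
      exact mul_left_cancel this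
end

section
/- Let [H•, E, G•] be a butterfly. Define the homomorphism δ: H₁ × G₁ → E by δ(h, g) = κ(h)·ι(g), and let E act on H₁ × G₁ by (h, g)^e = (h^{π(e)}, g^{j(e)}). Then δ is a group homomorphism from the direct product H₁ × G₁ (this uses that im κ and im ι commute), the action is by group automorphisms, and (δ: H₁ × G₁ → E) with this action is a crossed module, i.e. δ((h,g)^e) = e⁻¹ δ(h,g) e and (h₀,g₀)^{δ(h₁,g₁)} = (h₁,g₁)⁻¹ (h₀,g₀) (h₁,g₁). -/
theorem butterfly_diagonal_crossed_module
    {H₁ H₀ G₁ G₀ : Type*} [Group H₁] [Group H₀] [Group G₁] [Group G₀]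
    (δH : H₁ →* H₀) (aH : H₁ → H₀ → H₁)
    (haH1 : ∀ h, aH h 1 = h)
    (haHmul : ∀ h x y, aH h (x * y) = aH (aH h x) y)
    (haHhom : ∀ h h' x, aH (h * h') x = aH h x * aH h' x)
    (hδH : ∀ h x, δH (aH h x) = x⁻¹ * δH h * x)
    (hpfH : ∀ h₀ h₁, aH h₀ (δH h₁) = h₁⁻¹ * h₀ * h₁)
    (δG : G₁ →* G₀) (aG : G₁ → G₀ → G₁)
    (haG1 : ∀ g, aG g 1 = g)
    (haGmul : ∀ g x y, aG g (x * y) = aG (aG g x) y)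
    (haGhom : ∀ g g' x, aG (g * g') x = aG g x * aG g' x)
    (hδG : ∀ g x, δG (aG g x) = x⁻¹ * δG g * x)
    (hpfG : ∀ g₀ g₁, aG g₀ (δG g₁) = g₁⁻¹ * g₀ * g₁)
    {E : Type*} [Group E]
    (κ : H₁ →* E) (ι : G₁ →* E) (π : E →* H₀) (j : E →* G₀)
    (hπκ : ∀ h, π (κ h) = δH h)
    (hjι : ∀ g, j (ι g) = δG g)
    (hjκ : ∀ h, j (κ h) = 1)
    (hπι : ∀ g, π (ι g) = 1)
    (hιinj : Function.Injective ι)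
    (hkerπ : ∀ e, π e = 1 → ∃ g, e = ι g)
    (hπsurj : Function.Surjective π)
    (heqι : ∀ g e, ι (aG g (j e)) = e⁻¹ * ι g * e)
    (heqκ : ∀ h e, κ (aH h (π e)) = e⁻¹ * κ h * e)
    (δ : H₁ × G₁ → E) (hδ : ∀ p, δ p = κ p.1 * ι p.2)
    (act : H₁ × G₁ → E → H₁ × G₁)
    (hact : ∀ p e, act p e = (aH p.1 (π e), aG p.2 (j e))) :
    (∀ p q : H₁ × G₁, δ (p * q) = δ p * δ q) ∧
    (∀ (e : E) (p q : H₁ × G₁), act (p * q) e = act p e * act q e) ∧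
    (∀ p : H₁ × G₁, act p 1 = p) ∧
    (∀ (p : H₁ × G₁) (e e' : E), act p (e * e') = act (act p e) e') ∧
    (∀ (p : H₁ × G₁) (e : E), δ (act p e) = e⁻¹ * δ p * e) ∧
    (∀ p q : H₁ × G₁, act p (δ q) = q⁻¹ * p * q) := by
  have hcomm : ∀ h g, κ h * ι g = ι g * κ h := by
    intro h g
    have := heqι g (κ h)
    rw [hjκ, haG1] at this
    conv_lhs => rw [this]
    group
  refine ⟨?_, ?_, ?_, ?_, ?_, ?_⟩
  · intro p q
    simp only [hδ, Prod.fst_mul, Prod.snd_mul, map_mul]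
    rw [mul_assoc, ← mul_assoc (κ q.1), hcomm, mul_assoc, ← mul_assoc]
  · intro e p q
    simp only [hact, Prod.fst_mul, Prod.snd_mul, haHhom, haGhom, Prod.mk_mul_mk]
  · intro p
    simp only [hact, map_one, haH1, haG1]
  · intro p e e'
    simp only [hact, map_mul, haHmul, haGmul]
  · intro p e
    simp only [hδ, hact, heqκ, heqι]
    group
  · intro p q
    simp only [hact, hδ, map_mul, hπκ, hπι, hjκ, hjι, mul_one, one_mul, hpfH, hpfG]
    rfl
end

section
/- Let [H•, E, G•] be a butterfly. For every h ∈ ker ∂_H there is a unique g ∈ G₁ with κ(h) = ι(g), and this g lies in ker ∂_G. The resulting map π₁(E): ker ∂_H → ker ∂_G, h ↦ g, is a group homomorphism. -/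
theorem butterfly_pi_one
    {H₁ H₀ G₁ G₀ : Type*} [Group H₁] [Group H₀] [Group G₁] [Group G₀]
    (δH : H₁ →* H₀) (aH : H₁ → H₀ → H₁)
    (haH1 : ∀ h, aH h 1 = h)
    (haHmul : ∀ h x y, aH h (x * y) = aH (aH h x) y)
    (haHhom : ∀ h h' x, aH (h * h') x = aH h x * aH h' x)
    (hδH : ∀ h x, δH (aH h x) = x⁻¹ * δH h * x)
    (hpfH : ∀ h₀ h₁, aH h₀ (δH h₁) = h₁⁻¹ * h₀ * h₁)
    (δG : G₁ →* G₀) (aG : G₁ → G₀ → G₁)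
    (haG1 : ∀ g, aG g 1 = g)
    (haGmul : ∀ g x y, aG g (x * y) = aG (aG g x) y)
    (haGhom : ∀ g g' x, aG (g * g') x = aG g x * aG g' x)
    (hδG : ∀ g x, δG (aG g x) = x⁻¹ * δG g * x)
    (hpfG : ∀ g₀ g₁, aG g₀ (δG g₁) = g₁⁻¹ * g₀ * g₁)
    {E : Type*} [Group E]
    (κ : H₁ →* E) (ι : G₁ →* E) (π : E →* H₀) (j : E →* G₀)
    (hπκ : ∀ h, π (κ h) = δH h)
    (hjι : ∀ g, j (ι g) = δG g)
    (hjκ : ∀ h, j (κ h) = 1)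
    (hπι : ∀ g, π (ι g) = 1)
    (hιinj : Function.Injective ι)
    (hkerπ : ∀ e, π e = 1 → ∃ g, e = ι g)
    (hπsurj : Function.Surjective π)
    (heqι : ∀ g e, ι (aG g (j e)) = e⁻¹ * ι g * e)
    (heqκ : ∀ h e, κ (aH h (π e)) = e⁻¹ * κ h * e) :
    (∀ h : H₁, δH h = 1 → ∃! g : G₁, κ h = ι g) ∧
    (∀ f : H₁ → G₁, (∀ h, δH h = 1 → κ h = ι (f h)) →
      (∀ h, δH h = 1 → δG (f h) = 1) ∧
      (∀ h h', δH h = 1 → δH h' = 1 → f (h * h') = f h * f h')) := by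
  constructor
  · intro h hh
    obtain ⟨g, hg⟩ := hkerπ (κ h) (by rw [hπκ, hh])
    exact ⟨g, hg, fun g' hg' => hιinj (hg'.symm.trans hg)⟩
  · intro f hf
    constructor
    · intro h hh
      have := hjκ h
      rw [hf h hh, hjι] at this
      exact this
    · intro h h' hh hh'
      apply hιinj
      rw [← hf (h * h') (by rw [map_mul, hh, hh', one_mul]), map_mul, map_mul,
        ← hf h hh, ← hf h' hh']
end

section
/- Let [H•, E, G•] be a butterfly. Then there is a well-defined group homomorphism π₀(E): H₀/∂_H(H₁) → G₀/∂_G(G₁) determined by: for x ∈ H₀, choose any e ∈ E with π(e) = x, and send the class of x to the class of j(e). (In particular this value is independent of the chosen lift e and of the representative x of the class.) -/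
theorem butterfly_pi_zero
    {H₁ H₀ G₁ G₀ : Type*} [Group H₁] [Group H₀] [Group G₁] [Group G₀]
    (δH : H₁ →* H₀) (aH : H₁ → H₀ → H₁)
    (haH1 : ∀ h, aH h 1 = h)
    (haHmul : ∀ h x y, aH h (x * y) = aH (aH h x) y)
    (haHhom : ∀ h h' x, aH (h * h') x = aH h x * aH h' x)
    (hδH : ∀ h x, δH (aH h x) = x⁻¹ * δH h * x)
    (hpfH : ∀ h₀ h₁, aH h₀ (δH h₁) = h₁⁻¹ * h₀ * h₁)
    (δG : G₁ →* G₀) (aG : G₁ → G₀ → G₁)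
    (haG1 : ∀ g, aG g 1 = g)
    (haGmul : ∀ g x y, aG g (x * y) = aG (aG g x) y)
    (haGhom : ∀ g g' x, aG (g * g') x = aG g x * aG g' x)
    (hδG : ∀ g x, δG (aG g x) = x⁻¹ * δG g * x)
    (hpfG : ∀ g₀ g₁, aG g₀ (δG g₁) = g₁⁻¹ * g₀ * g₁)
    {E : Type*} [Group E]
    (κ : H₁ →* E) (ι : G₁ →* E) (π : E →* H₀) (j : E →* G₀)
    (hπκ : ∀ h, π (κ h) = δH h)
    (hjι : ∀ g, j (ι g) = δG g)
    (hjκ : ∀ h, j (κ h) = 1)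
    (hπι : ∀ g, π (ι g) = 1)
    (hιinj : Function.Injective ι)
    (hkerπ : ∀ e, π e = 1 → ∃ g, e = ι g)
    (hπsurj : Function.Surjective π)
    (heqι : ∀ g e, ι (aG g (j e)) = e⁻¹ * ι g * e)
    (heqκ : ∀ h e, κ (aH h (π e)) = e⁻¹ * κ h * e) :
    ∃! Φ : H₀ ⧸ Subgroup.normalClosure (Set.range δH) →*
           G₀ ⧸ Subgroup.normalClosure (Set.range δG),
      ∀ e : E, Φ (QuotientGroup.mk (π e)) = QuotientGroup.mk (j e) := by

  classical
  set NH := Subgroup.normalClosure (Set.range δH)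
  set NG := Subgroup.normalClosure (Set.range δG)
  -- map E → G₀ ⧸ NG
  set ψ : E →* G₀ ⧸ NG := (QuotientGroup.mk' NG).comp j with hψ
  have hker : π.ker ≤ ψ.ker := by
    intro e he
    obtain ⟨g, rfl⟩ := hkerπ e he
    have : δG g ∈ NG := Subgroup.subset_normalClosure ⟨g, rfl⟩
    simp only [hψ, MonoidHom.mem_ker, MonoidHom.comp_apply, hjι]
    exact (QuotientGroup.eq_one_iff _).2 this
  set ψbar : (E ⧸ π.ker) →* G₀ ⧸ NG := QuotientGroup.lift π.ker ψ hker with hψbar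
  set eqv : (E ⧸ π.ker) ≃* H₀ := QuotientGroup.quotientKerEquivOfSurjective π hπsurj with heqv
  set φ : H₀ →* G₀ ⧸ NG := ψbar.comp eqv.symm.toMonoidHom with hφ
  have hφπ : ∀ e : E, φ (π e) = QuotientGroup.mk (j e) := by
    intro e
    have h1 : eqv.symm (π e) = QuotientGroup.mk e := by
      apply eqv.injective
      simp only [MulEquiv.apply_symm_apply]
      rfl
    simp only [hφ, MonoidHom.comp_apply, MulEquiv.coe_toMonoidHom, h1]
    rfl
  have hNH : NH ≤ φ.ker := by
    apply Subgroup.normalClosure_le_normal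
    rintro x ⟨h, rfl⟩
    have : φ (π (κ h)) = QuotientGroup.mk (j (κ h)) := hφπ (κ h)
    rw [hπκ, hjκ] at this
    simpa [MonoidHom.mem_ker] using this
  refine ⟨QuotientGroup.lift NH φ hNH, ?_, ?_⟩
  · intro e
    exact hφπ e
  · intro Φ hΦ
    ext x
    obtain ⟨e, rfl⟩ := hπsurj x
    show Φ (QuotientGroup.mk (π e)) = QuotientGroup.lift NH φ hNH (QuotientGroup.mk (π e))
    rw [hΦ e]
    exact (hφπ e).symm
end

section
/- Let [H•, E, G•] be a butterfly, and let δ: H₁ × G₁ → E, δ(h,g) = κ(h)ι(g), be the associated crossed module. Then the strict projection (pr₁, π): (H₁ × G₁ → E) → (H₁ → H₀) is a quasi-isomorphism: the first projection restricts to an isomorphism ker δ ≅ ker ∂_H, and π induces an isomorphism E/δ(H₁ × G₁) ≅ H₀/∂_H(H₁). -/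
theorem butterfly_projection_quasi_isomorphism
    {H₁ H₀ G₁ G₀ : Type*} [Group H₁] [Group H₀] [Group G₁] [Group G₀]
    (δH : H₁ →* H₀) (aH : H₁ → H₀ → H₁)
    (haH1 : ∀ h, aH h 1 = h)
    (haHmul : ∀ h x y, aH h (x * y) = aH (aH h x) y)
    (haHhom : ∀ h h' x, aH (h * h') x = aH h x * aH h' x)
    (hδH : ∀ h x, δH (aH h x) = x⁻¹ * δH h * x)
    (hpfH : ∀ h₀ h₁, aH h₀ (δH h₁) = h₁⁻¹ * h₀ * h₁)
    (δG : G₁ →* G₀) (aG : G₁ → G₀ → G₁)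
    (haG1 : ∀ g, aG g 1 = g)
    (haGmul : ∀ g x y, aG g (x * y) = aG (aG g x) y)
    (haGhom : ∀ g g' x, aG (g * g') x = aG g x * aG g' x)
    (hδG : ∀ g x, δG (aG g x) = x⁻¹ * δG g * x)
    (hpfG : ∀ g₀ g₁, aG g₀ (δG g₁) = g₁⁻¹ * g₀ * g₁)
    {E : Type*} [Group E]
    (κ : H₁ →* E) (ι : G₁ →* E) (π : E →* H₀) (j : E →* G₀)
    (hπκ : ∀ h, π (κ h) = δH h)
    (hjι : ∀ g, j (ι g) = δG g)
    (hjκ : ∀ h, j (κ h) = 1)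
    (hπι : ∀ g, π (ι g) = 1)
    (hιinj : Function.Injective ι)
    (hkerπ : ∀ e, π e = 1 → ∃ g, e = ι g)
    (hπsurj : Function.Surjective π)
    (heqι : ∀ g e, ι (aG g (j e)) = e⁻¹ * ι g * e)
    (heqκ : ∀ h e, κ (aH h (π e)) = e⁻¹ * κ h * e) :
    (∀ p : H₁ × G₁, κ p.1 * ι p.2 = 1 → δH p.1 = 1) ∧
    (∀ h : H₁, δH h = 1 → ∃! p : H₁ × G₁, κ p.1 * ι p.2 = 1 ∧ p.1 = h) ∧
    (∃! Φ : E ⧸ Subgroup.normalClosure (Set.range fun p : H₁ × G₁ => κ p.1 * ι p.2) →*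
            H₀ ⧸ Subgroup.normalClosure (Set.range δH),
      (∀ e : E, Φ (QuotientGroup.mk e) = QuotientGroup.mk (π e)) ∧
      Function.Bijective Φ) := by
  -- N = normalClosure (range δH) equals range δH since the latter is normal
  haveI hNorm : δH.range.Normal := by
    constructor
    rintro _ ⟨h, rfl⟩ g
    exact ⟨aH h g⁻¹, by rw [hδH]; group⟩
  have hNle : Subgroup.normalClosure (Set.range δH) ≤ δH.range :=
    Subgroup.normalClosure_le_normal (by rintro _ ⟨h, rfl⟩; exact ⟨h, rfl⟩)
  refine ⟨?_, ?_, ?_⟩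
  · rintro ⟨h, g⟩ hp
    have := congrArg π hp
    simp only [map_mul, map_one, hπκ, hπι, mul_one] at this
    exact this
  · intro h hh
    obtain ⟨g, hg⟩ := hkerπ (κ h) (by rw [hπκ, hh])
    refine ⟨(h, g⁻¹), ⟨by simp [hg], rfl⟩, ?_⟩
    rintro ⟨h', g'⟩ ⟨hq, rfl⟩
    have hq' : ι g * ι g' = 1 := by rw [← hg]; exact hq
    have hg' : g' = g⁻¹ := hιinj (by rw [map_inv]; exact eq_inv_of_mul_eq_one_right hq')
    simp [hg']
  · set S : Set E := Set.range fun p : H₁ × G₁ => κ p.1 * ι p.2 with hS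
    set M := Subgroup.normalClosure S with hM
    set N := Subgroup.normalClosure (Set.range δH) with hN
    set φ : E →* H₀ ⧸ N := (QuotientGroup.mk' N).comp π with hφ
    have hker : M ≤ φ.ker := by
      apply Subgroup.normalClosure_le_normal
      rintro _ ⟨⟨h, g⟩, rfl⟩
      have hπe : π (κ h * ι g) = δH h := by simp [hπκ, hπι]
      simp only [MonoidHom.mem_ker, hφ, MonoidHom.comp_apply, hπe, QuotientGroup.mk'_apply]
      exact (QuotientGroup.eq_one_iff _).2 (Subgroup.subset_normalClosure ⟨h, hπe.symm⟩)
    set Φ : E ⧸ M →* H₀ ⧸ N := QuotientGroup.lift M φ hker with hΦ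
    have hΦe : ∀ e : E, Φ (QuotientGroup.mk e) = QuotientGroup.mk (π e) := fun e => rfl
    -- commuting fact: κ h and ι g commute
    have hcomm : ∀ (h : H₁) (g : G₁), (κ h)⁻¹ * ι g * κ h = ι g := by
      intro h g
      rw [← heqι g (κ h), hjκ, haG1]
    refine ⟨Φ, ⟨hΦe, ?_, ?_⟩, ?_⟩
    · -- injective
      rw [injective_iff_map_eq_one]
      intro x
      refine QuotientGroup.induction_on x ?_
      intro e he
      rw [hΦe, QuotientGroup.eq_one_iff] at he
      obtain ⟨h, hh⟩ := hNle he
      obtain ⟨g, hg⟩ := hkerπ ((κ h)⁻¹ * e) (by simp [hπκ, hh])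
      have he' : e = κ h * ι g := by
        rw [← hg]; group
      rw [QuotientGroup.eq_one_iff]
      exact Subgroup.subset_normalClosure ⟨(h, g), he'.symm⟩
    · -- surjective
      intro y
      refine QuotientGroup.induction_on y ?_
      intro h₀
      obtain ⟨e, he⟩ := hπsurj h₀
      exact ⟨QuotientGroup.mk e, by rw [hΦe, he]⟩
    · rintro Ψ ⟨hΨe, -⟩
      ext e
      exact (hΨe e).trans (hΦe e).symm
end

section
/- Let [H•, E, G•] be a flippable (reversible) butterfly, i.e. in addition κ is injective, ker j = im κ, and j is surjective. Then the induced homomorphism π₀(E): H₀/∂_H(H₁) → G₀/∂_G(G₁) (sending the class of π(e) to the class of j(e)) is a group isomorphism, and the induced homomorphism π₁(E): ker ∂_H → ker ∂_G (defined by κ(h) = ι(π₁(E)(h))) is a group isomorphism. -/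
theorem butterfly_aux {H₁ H₀ G₁ G₀ E : Type*}
    [Group H₁] [Group H₀] [Group G₁] [Group G₀] [Group E]
    (δH : H₁ →* H₀) (δG : G₁ →* G₀)
    (κ : H₁ →* E) (ι : G₁ →* E) (π : E →* H₀) (j : E →* G₀)
    (hπκ : ∀ h, π (κ h) = δH h)
    (hjι : ∀ g, j (ι g) = δG g)
    (hjκ : ∀ h, j (κ h) = 1)
    (hkerπ : ∀ e, π e = 1 → ∃ g, e = ι g)
    (hπsurj : Function.Surjective π) :
    ∃ f : H₀ ⧸ Subgroup.normalClosure (Set.range δH) →*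
          G₀ ⧸ Subgroup.normalClosure (Set.range δG),
      ∀ e, f (QuotientGroup.mk (π e)) = QuotientGroup.mk (j e) := by
  set NG := Subgroup.normalClosure (Set.range δG) with hNGdef
  let q : E →* G₀ ⧸ NG := (QuotientGroup.mk' NG).comp j
  have hker : π.ker ≤ q.ker := by
    intro e he
    obtain ⟨g, rfl⟩ := hkerπ e he
    show ((j (ι g) : G₀) : G₀ ⧸ NG) = 1
    rw [hjι]
    exact (QuotientGroup.eq_one_iff _).mpr (Subgroup.subset_normalClosure ⟨g, rfl⟩)
  let qbar : E ⧸ π.ker →* G₀ ⧸ NG := QuotientGroup.lift π.ker q hker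
  let eqv := QuotientGroup.quotientKerEquivOfSurjective π hπsurj
  let f₀ : H₀ →* G₀ ⧸ NG := qbar.comp (eqv.symm.toMonoidHom)
  have hf₀ : ∀ e, f₀ (π e) = QuotientGroup.mk (j e) := by
    intro e
    have h1 : eqv.symm (π e) = QuotientGroup.mk e := by
      apply eqv.injective
      simp only [MulEquiv.apply_symm_apply]
      rfl
    show qbar (eqv.symm (π e)) = _
    rw [h1]
    rfl
  have hNH : Subgroup.normalClosure (Set.range δH) ≤ f₀.ker := by
    apply Subgroup.normalClosure_le_normal
    rintro _ ⟨h, rfl⟩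
    show f₀ (δH h) = 1
    rw [← hπκ, hf₀, hjκ]
    rfl
  exact ⟨QuotientGroup.lift _ f₀ hNH, fun e => hf₀ e⟩

theorem flippable_butterfly_equivalence
    {H₁ H₀ G₁ G₀ : Type*} [Group H₁] [Group H₀] [Group G₁] [Group G₀]
    (δH : H₁ →* H₀) (aH : H₁ → H₀ → H₁)
    (haH1 : ∀ h, aH h 1 = h)
    (haHmul : ∀ h x y, aH h (x * y) = aH (aH h x) y)
    (haHhom : ∀ h h' x, aH (h * h') x = aH h x * aH h' x)
    (hδH : ∀ h x, δH (aH h x) = x⁻¹ * δH h * x)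
    (hpfH : ∀ h₀ h₁, aH h₀ (δH h₁) = h₁⁻¹ * h₀ * h₁)
    (δG : G₁ →* G₀) (aG : G₁ → G₀ → G₁)
    (haG1 : ∀ g, aG g 1 = g)
    (haGmul : ∀ g x y, aG g (x * y) = aG (aG g x) y)
    (haGhom : ∀ g g' x, aG (g * g') x = aG g x * aG g' x)
    (hδG : ∀ g x, δG (aG g x) = x⁻¹ * δG g * x)
    (hpfG : ∀ g₀ g₁, aG g₀ (δG g₁) = g₁⁻¹ * g₀ * g₁)
    {E : Type*} [Group E]
    (κ : H₁ →* E) (ι : G₁ →* E) (π : E →* H₀) (j : E →* G₀)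
    (hπκ : ∀ h, π (κ h) = δH h)
    (hjι : ∀ g, j (ι g) = δG g)
    (hjκ : ∀ h, j (κ h) = 1)
    (hπι : ∀ g, π (ι g) = 1)
    (hιinj : Function.Injective ι)
    (hkerπ : ∀ e, π e = 1 → ∃ g, e = ι g)
    (hπsurj : Function.Surjective π)
    (heqι : ∀ g e, ι (aG g (j e)) = e⁻¹ * ι g * e)
    (heqκ : ∀ h e, κ (aH h (π e)) = e⁻¹ * κ h * e)
    (hκinj : Function.Injective κ)
    (hkerj : ∀ e, j e = 1 → ∃ h, e = κ h)
    (hjsurj : Function.Surjective j) :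
    (∃! Φ : H₀ ⧸ Subgroup.normalClosure (Set.range δH) →*
            G₀ ⧸ Subgroup.normalClosure (Set.range δG),
      (∀ e : E, Φ (QuotientGroup.mk (π e)) = QuotientGroup.mk (j e)) ∧
      Function.Bijective Φ) ∧
    (∀ h : H₁, δH h = 1 → ∃! g : G₁, δG g = 1 ∧ κ h = ι g) ∧
    (∀ g : G₁, δG g = 1 → ∃! h : H₁, δH h = 1 ∧ κ h = ι g) := by
  obtain ⟨Φ, hΦ⟩ := butterfly_aux δH δG κ ι π j hπκ hjι hjκ hkerπ hπsurj
  obtain ⟨Ψ, hΨ⟩ := butterfly_aux δG δH ι κ j π hjι hπκ hπι hkerj hjsurj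
  have hsurjH : ∀ x : H₀ ⧸ Subgroup.normalClosure (Set.range δH),
      ∃ e : E, x = QuotientGroup.mk (π e) := by
    intro x
    obtain ⟨h₀, rfl⟩ := QuotientGroup.mk_surjective x
    obtain ⟨e, rfl⟩ := hπsurj h₀
    exact ⟨e, rfl⟩
  have hsurjG : ∀ y : G₀ ⧸ Subgroup.normalClosure (Set.range δG),
      ∃ e : E, y = QuotientGroup.mk (j e) := by
    intro y
    obtain ⟨g₀, rfl⟩ := QuotientGroup.mk_surjective y
    obtain ⟨e, rfl⟩ := hjsurj g₀
    exact ⟨e, rfl⟩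
  have hΨΦ : ∀ x, Ψ (Φ x) = x := by
    intro x
    obtain ⟨e, rfl⟩ := hsurjH x
    rw [hΦ, hΨ]
  have hΦΨ : ∀ y, Φ (Ψ y) = y := by
    intro y
    obtain ⟨e, rfl⟩ := hsurjG y
    rw [hΨ, hΦ]
  refine ⟨⟨Φ, ⟨hΦ, ?_, ?_⟩, ?_⟩, ?_, ?_⟩
  · intro a b hab
    rw [← hΨΦ a, hab, hΨΦ b]
  · intro y
    exact ⟨Ψ y, hΦΨ y⟩
  · rintro Φ' ⟨hΦ', _⟩
    apply MonoidHom.ext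
    intro x
    obtain ⟨e, rfl⟩ := hsurjH x
    rw [hΦ', hΦ]
  · intro h hh
    obtain ⟨g, hg⟩ := hkerπ (κ h) (by rw [hπκ, hh])
    refine ⟨g, ⟨?_, hg⟩, ?_⟩
    · rw [← hjι, ← hg, hjκ]
    · rintro g' ⟨_, hg'⟩
      exact hιinj (hg'.symm.trans hg)
  · intro g hg
    obtain ⟨h, hh⟩ := hkerj (ι g) (by rw [hjι, hg])
    refine ⟨h, ⟨?_, hh.symm⟩, ?_⟩
    · rw [← hπκ, ← hh, hπι]
    · rintro h' ⟨_, hh'⟩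
      exact hκinj (hh'.trans hh)
end

section
/- Let [H•, E, G•] be a butterfly. Then κ(H₁) is a normal subgroup of ker j, and the following six-term sequence of groups is exact: 1 → ker κ → ker ∂_H → ker ∂_G → (ker j)/κ(H₁) → H₀/∂_H(H₁) → G₀/∂_G(G₁), where: the first map is the inclusion (using ∂_H = π∘κ); the second is π₁(E) defined by κ(h) = ι(π₁(E)(h)); the third sends g ∈ ker ∂_G to the class of ι(g) in (ker j)/κ(H₁); the fourth sends the class of e ∈ ker j to the class of π(e); and the fifth is π₀(E) sending the class of π(e) to the class of j(e). -/
theorem butterfly_six_term_exact_sequence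
    {H₁ H₀ G₁ G₀ : Type*} [Group H₁] [Group H₀] [Group G₁] [Group G₀]
    (δH : H₁ →* H₀) (aH : H₁ → H₀ → H₁)
    (haH1 : ∀ h, aH h 1 = h)
    (haHmul : ∀ h x y, aH h (x * y) = aH (aH h x) y)
    (haHhom : ∀ h h' x, aH (h * h') x = aH h x * aH h' x)
    (hδH : ∀ h x, δH (aH h x) = x⁻¹ * δH h * x)
    (hpfH : ∀ h₀ h₁, aH h₀ (δH h₁) = h₁⁻¹ * h₀ * h₁)
    (δG : G₁ →* G₀) (aG : G₁ → G₀ → G₁)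
    (haG1 : ∀ g, aG g 1 = g)
    (haGmul : ∀ g x y, aG g (x * y) = aG (aG g x) y)
    (haGhom : ∀ g g' x, aG (g * g') x = aG g x * aG g' x)
    (hδG : ∀ g x, δG (aG g x) = x⁻¹ * δG g * x)
    (hpfG : ∀ g₀ g₁, aG g₀ (δG g₁) = g₁⁻¹ * g₀ * g₁)
    {E : Type*} [Group E]
    (κ : H₁ →* E) (ι : G₁ →* E) (π : E →* H₀) (j : E →* G₀)
    (hπκ : ∀ h, π (κ h) = δH h)
    (hjι : ∀ g, j (ι g) = δG g)
    (hjκ : ∀ h, j (κ h) = 1)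
    (hπι : ∀ g, π (ι g) = 1)
    (hιinj : Function.Injective ι)
    (hkerπ : ∀ e, π e = 1 → ∃ g, e = ι g)
    (hπsurj : Function.Surjective π)
    (heqι : ∀ g e, ι (aG g (j e)) = e⁻¹ * ι g * e)
    (heqκ : ∀ h e, κ (aH h (π e)) = e⁻¹ * κ h * e)
    (π₁ : H₁ → G₁) (hπ₁ : ∀ h, δH h = 1 → κ h = ι (π₁ h)) :
    (∀ (e : E) (h : H₁), j e = 1 → ∃ h', e⁻¹ * κ h * e = κ h') ∧
    (∀ h : H₁, κ h = 1 → δH h = 1) ∧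
    (∀ h : H₁, δH h = 1 → (π₁ h = 1 ↔ κ h = 1)) ∧
    (∀ g : G₁, δG g = 1 →
      ((∃ h, δH h = 1 ∧ π₁ h = g) ↔ (∃ h, ι g = κ h))) ∧
    (∀ e : E, j e = 1 →
      ((∃ g h, δG g = 1 ∧ e = ι g * κ h) ↔ π e ∈ δH.range)) ∧
    (∀ x : H₀,
      ((∃ e, j e = 1 ∧ (π e)⁻¹ * x ∈ δH.range) ↔
       (∃ e, π e = x ∧ j e ∈ δG.range))) := by
  refine ⟨?_, ?_, ?_, ?_, ?_, ?_⟩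
  · exact fun e h _ => ⟨aH h (π e), (heqκ h e).symm⟩
  · intro h hk
    rw [← hπκ, hk, map_one]
  · intro h hd
    constructor
    · intro h1
      rw [hπ₁ h hd, h1, map_one]
    · intro hk
      apply hιinj
      rw [← hπ₁ h hd, hk, map_one]
  · intro g _
    constructor
    · rintro ⟨h, hd, rfl⟩
      exact ⟨h, (hπ₁ h hd).symm⟩
    · rintro ⟨h, hig⟩
      have hd : δH h = 1 := by rw [← hπκ, ← hig, hπι]
      exact ⟨h, hd, hιinj (by rw [← hπ₁ h hd, hig])⟩
  · intro e hje
    constructor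
    · rintro ⟨g, h, _, rfl⟩
      exact ⟨h, by rw [map_mul, hπι, hπκ, one_mul]⟩
    · rintro ⟨h, hh⟩
      have : π (e * (κ h)⁻¹) = 1 := by
        rw [map_mul, map_inv, hπκ, ← hh, mul_inv_cancel]
      obtain ⟨g, hg⟩ := hkerπ _ this
      refine ⟨g, h, ?_, ?_⟩
      · rw [← hjι, ← hg, map_mul, map_inv, hje, hjκ, one_mul, inv_one]
      · rw [← hg]; group
  · intro x
    constructor
    · rintro ⟨e, hje, h, hh⟩
      refine ⟨e * κ h, ?_, ?_⟩
      · rw [map_mul, hπκ, hh]; group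
      · rw [map_mul, hje, hjκ, one_mul]; exact ⟨1, by simp⟩
    · rintro ⟨e, hpe, g, hg⟩
      refine ⟨e * (ι g)⁻¹, ?_, ⟨1, ?_⟩⟩
      · rw [map_mul, map_inv, hjι, hg, mul_inv_cancel]
      · rw [map_mul, map_inv, hπι, hpe, map_one, inv_one, mul_one, inv_mul_cancel]
end

section
/- Let (f₁, f₀), (f₁', f₀'), (f₁'', f₀'') be strict morphisms of crossed modules H• → G•, let γ be a homotopy from (f₁, f₀) to (f₁', f₀'), and let γ' be a homotopy from (f₁', f₀') to (f₁'', f₀''). Then the pointwise product x ↦ γ(x)·γ'(x) is a homotopy from (f₁, f₀) to (f₁'', f₀''). -/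
theorem homotopy_composition
    {H₁ H₀ G₁ G₀ : Type*} [Group H₁] [Group H₀] [Group G₁] [Group G₀]
    (δH : H₁ →* H₀) (aH : H₁ → H₀ → H₁)
    (haH1 : ∀ h, aH h 1 = h)
    (haHmul : ∀ h x y, aH h (x * y) = aH (aH h x) y)
    (haHhom : ∀ h h' x, aH (h * h') x = aH h x * aH h' x)
    (hδH : ∀ h x, δH (aH h x) = x⁻¹ * δH h * x)
    (hpfH : ∀ h₀ h₁, aH h₀ (δH h₁) = h₁⁻¹ * h₀ * h₁)
    (δG : G₁ →* G₀) (aG : G₁ → G₀ → G₁)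
    (haG1 : ∀ g, aG g 1 = g)
    (haGmul : ∀ g x y, aG g (x * y) = aG (aG g x) y)
    (haGhom : ∀ g g' x, aG (g * g') x = aG g x * aG g' x)
    (hδG : ∀ g x, δG (aG g x) = x⁻¹ * δG g * x)
    (hpfG : ∀ g₀ g₁, aG g₀ (δG g₁) = g₁⁻¹ * g₀ * g₁)
    (f₁ : H₁ →* G₁) (f₀ : H₀ →* G₀)
    (hf : ∀ h, δG (f₁ h) = f₀ (δH h))
    (hfe : ∀ h x, f₁ (aH h x) = aG (f₁ h) (f₀ x))
    (f₁' : H₁ →* G₁) (f₀' : H₀ →* G₀)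
    (hf' : ∀ h, δG (f₁' h) = f₀' (δH h))
    (hfe' : ∀ h x, f₁' (aH h x) = aG (f₁' h) (f₀' x))
    (f₁'' : H₁ →* G₁) (f₀'' : H₀ →* G₀)
    (hf'' : ∀ h, δG (f₁'' h) = f₀'' (δH h))
    (hfe'' : ∀ h x, f₁'' (aH h x) = aG (f₁'' h) (f₀'' x))
    (γ : H₀ → G₁)
    (hγa : ∀ x, f₀ x * δG (γ x) = f₀' x)
    (hγb : ∀ (h : H₁) (x y : H₀), x * δH h = y → γ x * f₁' h = f₁ h * γ y)
    (hγc : ∀ x x', γ (x * x') = aG (γ x) (f₀ x') * γ x')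
    (γ' : H₀ → G₁)
    (hγ'a : ∀ x, f₀' x * δG (γ' x) = f₀'' x)
    (hγ'b : ∀ (h : H₁) (x y : H₀), x * δH h = y → γ' x * f₁'' h = f₁' h * γ' y)
    (hγ'c : ∀ x x', γ' (x * x') = aG (γ' x) (f₀' x') * γ' x') :
    (∀ x, f₀ x * δG (γ x * γ' x) = f₀'' x) ∧
    (∀ (h : H₁) (x y : H₀), x * δH h = y →
      (γ x * γ' x) * f₁'' h = f₁ h * (γ y * γ' y)) ∧
    (∀ x x', γ (x * x') * γ' (x * x') = aG (γ x * γ' x) (f₀ x') * (γ x' * γ' x')) := by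
  refine ⟨?_, ?_, ?_⟩
  · intro x
    rw [map_mul, ← mul_assoc, hγa, hγ'a]
  · intro h x y hxy
    calc γ x * γ' x * f₁'' h = γ x * (γ' x * f₁'' h) := by group
      _ = γ x * (f₁' h * γ' y) := by rw [hγ'b h x y hxy]
      _ = (γ x * f₁' h) * γ' y := by group
      _ = f₁ h * (γ y * γ' y) := by rw [hγb h x y hxy]; group
  · intro x x'
    have key : γ x' * aG (γ' x) (f₀' x') = aG (γ' x) (f₀ x') * γ x' := by
      rw [← hγa x', haGmul, hpfG]
      group
    rw [hγc, hγ'c, haGhom]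
    calc aG (γ x) (f₀ x') * γ x' * (aG (γ' x) (f₀' x') * γ' x')
        = aG (γ x) (f₀ x') * (γ x' * aG (γ' x) (f₀' x')) * γ' x' := by group
      _ = aG (γ x) (f₀ x') * (aG (γ' x) (f₀ x') * γ x') * γ' x' := by rw [key]
      _ = aG (γ x) (f₀ x') * aG (γ' x) (f₀ x') * (γ x' * γ' x') := by group
end

section
/- In the setting of a braided butterfly datum (P, β, ρ, σ, s₁, s₂) for the crossed module (∂: G₁ → G₀), the braiding c: G₀ × G₀ → G₁ defined by β(c(x, y)) = s₂(y)⁻¹ s₁(x)⁻¹ s₂(y) s₁(x) satisfies the two cocycle (hexagon) identities: c(x, yz) = c(x, y)^{z} · c(x, z) and c(xy, z) = c(y, z) · c(x, z)^{y} for all x, y, z ∈ G₀. -/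
theorem braided_butterfly_hexagon
    {G₁ G₀ : Type*} [Group G₁] [Group G₀]
    (δG : G₁ →* G₀) (aG : G₁ → G₀ → G₁)
    (haG1 : ∀ g, aG g 1 = g)
    (haGmul : ∀ g x y, aG g (x * y) = aG (aG g x) y)
    (haGhom : ∀ g g' x, aG (g * g') x = aG g x * aG g' x)
    (hδG : ∀ g x, δG (aG g x) = x⁻¹ * δG g * x)
    (hpfG : ∀ g₀ g₁, aG g₀ (δG g₁) = g₁⁻¹ * g₀ * g₁)
    {P : Type*} [Group P]
    (β : G₁ →* P) (ρ : P →* G₀ × G₀) (σ : P →* G₀)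
    (hβinj : Function.Injective β)
    (hkerρ : ∀ p, ρ p = 1 → ∃ g, p = β g)
    (hσβ : ∀ g, σ (β g) = δG g)
    (heqβ : ∀ g p, β (aG g (σ p)) = p⁻¹ * β g * p)
    (s₁ s₂ : G₀ →* P)
    (hρs₁ : ∀ x, ρ (s₁ x) = (x, 1))
    (hρs₂ : ∀ y, ρ (s₂ y) = (1, y))
    (hσs₁ : ∀ x, σ (s₁ x) = x)
    (hσs₂ : ∀ y, σ (s₂ y) = y)
    (c : G₀ → G₀ → G₁)
    (hc : ∀ x y, β (c x y) = (s₂ y)⁻¹ * (s₁ x)⁻¹ * s₂ y * s₁ x) :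
    (∀ x y z : G₀, c x (y * z) = aG (c x y) z * c x z) ∧
    (∀ x y z : G₀, c (x * y) z = c y z * aG (c x z) y) := by
  have key2 : ∀ g z, β (aG g z) = (s₂ z)⁻¹ * β g * s₂ z := by
    intro g z
    have h := heqβ g (s₂ z)
    rwa [hσs₂] at h
  have key1 : ∀ g z, β (aG g z) = (s₁ z)⁻¹ * β g * s₁ z := by
    intro g z
    have h := heqβ g (s₁ z)
    rwa [hσs₁] at h
  constructor
  · intro x y z
    apply hβinj
    rw [map_mul, hc, hc, key2, hc, map_mul]
    group
  · intro x y z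
    apply hβinj
    rw [map_mul, hc, hc, key1, hc, map_mul]
    group
end
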